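/- Let 𝒜 be a finite nonempty set, ℋ a finite set of N pairwise distinct functions from 𝒜 to {−1,+1} with coherence parameter c* < 1, and suppose (𝒜, ℋ) is k-neighborly. Fix h* ∈ ℋ and define the GBS sequence by ℋ_0 = ℋ, A_n any minimizer over A ∈ 𝒜 of |Σ_{h∈ℋ_n} h(A)|, and ℋ_{n+1} = {h ∈ ℋ_n : h(A_n) = h*(A_n)}. Then ℋ_n = {h*} for every n ≥ ⌈log N / log(λ^{−1})⌉, where λ = max{(1+c*)/2, (k+1)/(k+2)}; that is, GBS terminates with the correct hypothesis after at most ⌈log N / log(λ^{−1})⌉ queries. -/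

import Mathlib

open scoped Classical

/-- The coherence parameter `c*(𝒜,ℋ)`: the infimum over probability mass functions `P`
on `𝒜` of `max_{h∈ℋ} |Σ_{A∈𝒜} h(A) P(A)|`. -/
noncomputable def coherenceParam {𝒜 : Type*} [Fintype 𝒜] (ℋ : Finset (𝒜 → ℝ)) : ℝ :=
  sInf {c : ℝ | ∃ P : 𝒜 → ℝ, (∀ A, 0 ≤ P A) ∧ (∑ A, P A) = 1 ∧
    ∀ h ∈ ℋ, |∑ A, h A * P A| ≤ c}

/-- Cells `A, A'` are `k`-neighbors: the number of hypotheses `h ∈ ℋ` with `h A ≠ h A'`,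
counting each complementary pair `{h, −h} ⊆ ℋ` only once, is at most `k`. -/
def kNeighbor {𝒜 : Type*} [Fintype 𝒜] (ℋ : Finset (𝒜 → ℝ)) (k : ℕ) (A A' : 𝒜) : Prop :=
  (ℋ.filter fun h => h A ≠ h A' ∧ -h ∈ ℋ).card +
    2 * (ℋ.filter fun h => h A ≠ h A' ∧ -h ∉ ℋ).card ≤ 2 * k

/-- `(𝒜,ℋ)` is `k`-neighborly: the `k`-neighborhood graph on `𝒜` is connected, i.e. every
pair of cells is joined by a sequence of `k`-neighbor steps. -/
def kNeighborly {𝒜 : Type*} [Fintype 𝒜] (ℋ : Finset (𝒜 → ℝ)) (k : ℕ) : Prop :=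
  ∀ A A' : 𝒜, Relation.ReflTransGen (kNeighbor ℋ k) A A'

/-- Sum of an odd function over a negation-closed set of ±1-valued functions is zero. -/
lemma GBS.odd_sum_zero {𝒜 : Type*} [Nonempty 𝒜] (s : Finset (𝒜 → ℝ))
    (hpm : ∀ h ∈ s, ∀ A, h A = 1 ∨ h A = -1)
    (hclosed : ∀ h ∈ s, -h ∈ s)
    (f : (𝒜 → ℝ) → ℝ) (hodd : ∀ h, f (-h) = - f h) :
    ∑ h ∈ s, f h = 0 := by
  refine Finset.sum_involution (fun h _ => -h) (fun h hh => by rw [hodd]; ring) ?_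
    (fun h hh => hclosed h hh) (fun h hh => neg_neg h)
  intro h hh _ hcon
  obtain ⟨A⟩ := ‹Nonempty 𝒜›
  have h1 : (-h) A = h A := congrFun hcon A
  simp only [Pi.neg_apply] at h1
  rcases hpm h hh A with h2 | h2 <;> rw [h2] at h1 <;> linarith

/-- Across a `k`-neighbor step, the hypothesis sum changes by at most `2k`. -/
lemma GBS.neighbor_step {𝒜 : Type*} [Fintype 𝒜] [Nonempty 𝒜] (ℋ H : Finset (𝒜 → ℝ))
    (hsub : H ⊆ ℋ) (hpm : ∀ h ∈ ℋ, ∀ A, h A = 1 ∨ h A = -1)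
    (k : ℕ) (A A' : 𝒜) (hnb : kNeighbor ℋ k A A') :
    |(∑ h ∈ H, h A) - ∑ h ∈ H, h A'| ≤ 2 * k := by
  have hdiff : (∑ h ∈ H, h A) - ∑ h ∈ H, h A' = ∑ h ∈ H, (h A - h A') := by
    rw [Finset.sum_sub_distrib]
  set D : Finset (𝒜 → ℝ) := H.filter (fun h => h A ≠ h A') with hD
  have hsumD : ∑ h ∈ H, (h A - h A') = ∑ h ∈ D, (h A - h A') := by
    refine (Finset.sum_subset (Finset.filter_subset _ _) ?_).symm
    intro h hh hnot
    simp only [hD, Finset.mem_filter, not_and, not_not] at hnot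
    rw [hnot hh]; ring
  set D1 : Finset (𝒜 → ℝ) := D.filter (fun h => -h ∈ H) with hD1
  set D2 : Finset (𝒜 → ℝ) := D.filter (fun h => -h ∉ H) with hD2
  have hsplit : ∑ h ∈ D, (h A - h A') = ∑ h ∈ D1, (h A - h A') + ∑ h ∈ D2, (h A - h A') :=
    (Finset.sum_filter_add_sum_filter_not D _ _).symm
  have hz : ∑ h ∈ D1, (h A - h A') = 0 := by
    refine GBS.odd_sum_zero D1 ?_ ?_ (fun h => h A - h A') (fun h => by simp [Pi.neg_apply]; ring)
    · intro h hh A0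
      exact hpm h (hsub ((Finset.filter_subset _ _ : D1 ⊆ D).trans (Finset.filter_subset _ _) hh)) A0
    · intro h hh
      simp only [hD1, hD, Finset.mem_filter] at hh ⊢
      obtain ⟨⟨hhH, hne⟩, hnegH⟩ := hh
      refine ⟨⟨hnegH, ?_⟩, by rwa [neg_neg]⟩
      simp only [Pi.neg_apply]
      exact fun hc => hne (neg_injective hc)
  have habs2 : |∑ h ∈ D2, (h A - h A')| ≤ 2 * D2.card := by
    calc |∑ h ∈ D2, (h A - h A')| ≤ ∑ h ∈ D2, |h A - h A'| := Finset.abs_sum_le_sum_abs _ _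
    _ ≤ ∑ _h ∈ D2, (2 : ℝ) := by
        refine Finset.sum_le_sum ?_
        intro h hh
        have hmem : h ∈ ℋ := hsub ((Finset.filter_subset _ _ : D2 ⊆ D).trans (Finset.filter_subset _ _) hh)
        rcases hpm h hmem A with h1 | h1 <;> rcases hpm h hmem A' with h2 | h2 <;>
          rw [h1, h2] <;> norm_num
    _ = 2 * D2.card := by rw [Finset.sum_const]; ring
  have hcount : 2 * D2.card ≤ 2 * k := by
    unfold kNeighbor at hnb
    set F1 := ℋ.filter (fun h => h A ≠ h A' ∧ -h ∈ ℋ) with hF1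
    set F2 := ℋ.filter (fun h => h A ≠ h A' ∧ -h ∉ ℋ) with hF2
    set D2a := D2.filter (fun h => -h ∈ ℋ) with hD2a
    set D2b := D2.filter (fun h => -h ∉ ℋ) with hD2b
    have hcardsplit : D2a.card + D2b.card = D2.card :=
      Finset.card_filter_add_card_filter_not _
    have hmemD2 : ∀ h ∈ D2, h ∈ H ∧ h A ≠ h A' ∧ -h ∉ H := by
      intro h hh
      simp only [hD2, hD, Finset.mem_filter] at hh
      exact ⟨hh.1.1, hh.1.2, hh.2⟩
    have hb : D2b ⊆ F2 := by
      intro h hh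
      simp only [hD2b, Finset.mem_filter] at hh
      obtain ⟨hh2, hneg⟩ := hh
      obtain ⟨hH, hne, _⟩ := hmemD2 h hh2
      simp only [hF2, Finset.mem_filter]
      exact ⟨hsub hH, hne, hneg⟩
    have ha : 2 * D2a.card ≤ F1.card := by
      have hsub1 : D2a ∪ D2a.image (fun h => -h) ⊆ F1 := by
        intro x hx
        rcases Finset.mem_union.mp hx with hx | hx
        · simp only [hD2a, Finset.mem_filter] at hx
          obtain ⟨hx2, hneg⟩ := hx
          obtain ⟨hH, hne, _⟩ := hmemD2 x hx2
          simp only [hF1, Finset.mem_filter]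
          exact ⟨hsub hH, hne, hneg⟩
        · obtain ⟨h, hh, rfl⟩ := Finset.mem_image.mp hx
          simp only [hD2a, Finset.mem_filter] at hh
          obtain ⟨hh2, hneg⟩ := hh
          obtain ⟨hH, hne, _⟩ := hmemD2 h hh2
          simp only [hF1, Finset.mem_filter, neg_neg]
          refine ⟨hneg, ?_, hsub hH⟩
          simp only [Pi.neg_apply]
          exact fun hc => hne (neg_injective hc)
      have hdisj : Disjoint D2a (D2a.image (fun h => -h)) := by
        rw [Finset.disjoint_right]
        intro x hx hx2
        obtain ⟨h, hh, rfl⟩ := Finset.mem_image.mp hx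
        simp only [hD2a, Finset.mem_filter] at hh hx2
        obtain ⟨hh2, _⟩ := hh
        exact (hmemD2 h hh2).2.2 ((hmemD2 _ hx2.1).1)
      have hcardim : (D2a.image (fun h => -h)).card = D2a.card :=
        Finset.card_image_of_injective _ neg_injective
      have := Finset.card_le_card hsub1
      rw [Finset.card_union_of_disjoint hdisj, hcardim] at this
      omega
    have := Finset.card_le_card hb
    omega
  rw [hdiff, hsumD, hsplit, hz, zero_add]
  calc |∑ h ∈ D2, (h A - h A')| ≤ 2 * D2.card := habs2
  _ ≤ 2 * k := by exact_mod_cast hcount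

/-- If the hypothesis sum takes both a nonpositive and a nonnegative value, then by
`k`-neighborliness some cell has hypothesis sum at most `k` in absolute value. -/
lemma GBS.exists_small {𝒜 : Type*} [Fintype 𝒜] [Nonempty 𝒜] (ℋ H : Finset (𝒜 → ℝ))
    (hsub : H ⊆ ℋ) (hpm : ∀ h ∈ ℋ, ∀ A, h A = 1 ∨ h A = -1)
    (k : ℕ) (hnbly : kNeighborly ℋ k) (Am Ap : 𝒜)
    (h1 : ∑ h ∈ H, h Am ≤ 0) (h2 : 0 ≤ ∑ h ∈ H, h Ap) :
    ∃ B, |∑ h ∈ H, h B| ≤ (k : ℝ) := by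
  have path := hnbly Am Ap
  revert h2
  induction path with
  | refl =>
      intro h2
      refine ⟨Am, ?_⟩
      rw [le_antisymm h1 h2, abs_zero]
      positivity
  | @tail b c hab hbc ih =>
      intro h2
      rcases le_total (∑ h ∈ H, h b) 0 with hb | hb
      · rcases le_or_gt (∑ h ∈ H, h c) (k : ℝ) with hc | hc
        · exact ⟨c, by rwa [abs_of_nonneg h2]⟩
        · refine ⟨b, ?_⟩
          have hns := GBS.neighbor_step ℋ H hsub hpm k b c hbc
          rw [abs_of_nonpos hb]
          have h3 := (abs_le.mp hns).1
          linarith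
      · exact ih hb

/-- The set left after one query step has size at most `(|H| + |W(A)|)/2`. -/
lemma GBS.split_bound {𝒜 : Type*} [Fintype 𝒜] (H : Finset (𝒜 → ℝ))
    (hpm : ∀ h ∈ H, ∀ A, h A = 1 ∨ h A = -1) (A : 𝒜) (c : ℝ) :
    2 * (((H.filter fun h => h A = c)).card : ℝ) ≤ (H.card : ℝ) + |∑ h ∈ H, h A| := by
  set P := H.filter (fun h => h A = 1) with hP
  set M := H.filter (fun h => ¬ (h A = 1)) with hM
  have hsum : ∑ h ∈ H, h A = (P.card : ℝ) - (M.card : ℝ) := by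
    rw [← Finset.sum_filter_add_sum_filter_not H (fun h => h A = 1)]
    have e1 : ∑ h ∈ P, h A = (P.card : ℝ) := by
      rw [Finset.sum_congr rfl (fun h hh => (Finset.mem_filter.mp hh).2), Finset.sum_const,
        nsmul_eq_mul, mul_one]
    have e2 : ∑ h ∈ M, h A = -(M.card : ℝ) := by
      have : ∀ h ∈ M, h A = -1 := by
        intro h hh
        rcases Finset.mem_filter.mp hh with ⟨hh1, hh2⟩
        rcases hpm h hh1 A with h1 | h1
        · exact absurd h1 hh2
        · exact h1
      rw [Finset.sum_congr rfl this, Finset.sum_const, nsmul_eq_mul, mul_neg_one]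
    rw [e1, e2]; ring
  have hcards : (P.card : ℝ) + (M.card : ℝ) = (H.card : ℝ) := by
    exact_mod_cast Finset.card_filter_add_card_filter_not (s := H) (fun h => h A = 1)
  have habs1 : (P.card : ℝ) - M.card ≤ |∑ h ∈ H, h A| := hsum ▸ le_abs_self _
  have habs2 : (M.card : ℝ) - P.card ≤ |∑ h ∈ H, h A| := by
    rw [hsum, abs_sub_comm]; exact le_abs_self _
  by_cases hc : c = 1
  · have : (H.filter fun h => h A = c) = P := by rw [hc]
    rw [this]; linarith
  · have hsubM : (H.filter fun h => h A = c) ⊆ M := by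
      intro h hh
      rcases Finset.mem_filter.mp hh with ⟨hh1, hh2⟩
      exact Finset.mem_filter.mpr ⟨hh1, by rw [hh2]; exact hc⟩
    have h1 := Finset.card_le_card hsubM
    have h2 : ((H.filter fun h => h A = c).card : ℝ) ≤ (M.card : ℝ) := by exact_mod_cast h1
    linarith

/-- Two distinct ±1 hypotheses disagree somewhere, so some cell has `|W| ≤ |H| - 2`. -/
lemma GBS.two_distinct {𝒜 : Type*} [Fintype 𝒜] (H : Finset (𝒜 → ℝ))
    (hpm : ∀ h ∈ H, ∀ A, h A = 1 ∨ h A = -1) (hc : 2 ≤ H.card) :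
    ∃ A, |∑ h ∈ H, h A| ≤ (H.card : ℝ) - 2 := by
  obtain ⟨h1, hm1, h2, hm2, hne⟩ := Finset.one_lt_card.mp hc
  obtain ⟨A, hA⟩ := Function.ne_iff.mp hne
  refine ⟨A, ?_⟩
  have hsub : {h1, h2} ⊆ H := by
    intro x hx
    rcases Finset.mem_insert.mp hx with rfl | hx
    · exact hm1
    · rw [Finset.mem_singleton.mp hx]; exact hm2
  have hsplit : ∑ h ∈ H \ {h1, h2}, h A + ∑ h ∈ ({h1, h2} : Finset (𝒜 → ℝ)), h A
      = ∑ h ∈ H, h A := Finset.sum_sdiff hsub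
  have hzero : ∑ h ∈ ({h1, h2} : Finset (𝒜 → ℝ)), h A = 0 := by
    rw [Finset.sum_pair hne]
    rcases hpm h1 hm1 A with e1 | e1 <;> rcases hpm h2 hm2 A with e2 | e2 <;>
      rw [e1, e2] <;> first | (exfalso; rw [e1, e2] at hA; exact hA rfl) | ring
  have hcard : (H \ {h1, h2}).card = H.card - 2 := by
    rw [Finset.card_sdiff_of_subset hsub, Finset.card_pair hne]
  have hbound : |∑ h ∈ H \ {h1, h2}, h A| ≤ ((H \ {h1, h2}).card : ℝ) := by
    calc |∑ h ∈ H \ {h1, h2}, h A| ≤ ∑ h ∈ H \ {h1, h2}, |h A| := Finset.abs_sum_le_sum_abs _ _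
    _ ≤ ∑ _h ∈ H \ {h1, h2}, (1 : ℝ) := by
        refine Finset.sum_le_sum fun h hh => ?_
        rcases hpm h (Finset.mem_sdiff.mp hh).1 A with e | e <;> rw [e] <;> norm_num
    _ = ((H \ {h1, h2}).card : ℝ) := by rw [Finset.sum_const, nsmul_eq_mul, mul_one]
  rw [← hsplit, hzero, add_zero]
  have hcast : (((H \ {h1, h2}).card : ℕ) : ℝ) = (H.card : ℝ) - 2 := by
    rw [hcard]
    push_cast [Nat.cast_sub hc]
    ring
  linarith [hbound, hcast.le, hcast.ge]

lemma GBS.coh_set_nonempty {𝒜 : Type*} [Fintype 𝒜] [Nonempty 𝒜] (ℋ : Finset (𝒜 → ℝ))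
    (hpm : ∀ h ∈ ℋ, ∀ A, h A = 1 ∨ h A = -1) :
    (1 : ℝ) ∈ {c : ℝ | ∃ P : 𝒜 → ℝ, (∀ A, 0 ≤ P A) ∧ (∑ A, P A) = 1 ∧
      ∀ h ∈ ℋ, |∑ A, h A * P A| ≤ c} := by
  have hcard : (0 : ℝ) < Fintype.card 𝒜 := by exact_mod_cast Fintype.card_pos
  refine ⟨fun _ => 1 / (Fintype.card 𝒜 : ℝ), fun A => by positivity, ?_, ?_⟩
  · rw [Finset.sum_const, nsmul_eq_mul, Finset.card_univ]
    field_simp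
  · intro h hh
    calc |∑ A, h A * (1 / (Fintype.card 𝒜 : ℝ))| ≤ ∑ A, |h A * (1 / (Fintype.card 𝒜 : ℝ))| :=
        Finset.abs_sum_le_sum_abs _ _
    _ = ∑ _A : 𝒜, 1 / (Fintype.card 𝒜 : ℝ) := by
        refine Finset.sum_congr rfl fun A _ => ?_
        rw [abs_mul]
        have h1 : |h A| = 1 := by rcases hpm h hh A with e | e <;> rw [e] <;> norm_num
        rw [h1, one_mul, abs_of_nonneg (by positivity : (0:ℝ) ≤ 1 / (Fintype.card 𝒜 : ℝ))]
    _ = 1 := by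
        rw [Finset.sum_const, nsmul_eq_mul, Finset.card_univ]
        field_simp

/-- If the hypothesis sum has constant sign, the minimizing cell has `|W| ≤ c* |H|`. -/
lemma GBS.coh_bound {𝒜 : Type*} [Fintype 𝒜] [Nonempty 𝒜] (ℋ H : Finset (𝒜 → ℝ))
    (hsub : H ⊆ ℋ) (hpm : ∀ h ∈ ℋ, ∀ A, h A = 1 ∨ h A = -1) (A₀ : 𝒜)
    (hmin : ∀ A, |∑ h ∈ H, h A₀| ≤ |∑ h ∈ H, h A|)
    (hsign : (∀ A, 0 < ∑ h ∈ H, h A) ∨ (∀ A, ∑ h ∈ H, h A < 0)) :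
    |∑ h ∈ H, h A₀| ≤ coherenceParam ℋ * H.card := by
  set m := |∑ h ∈ H, h A₀| with hm
  rcases Nat.eq_zero_or_pos H.card with hc | hc
  · rw [Finset.card_eq_zero.mp hc] at hm ⊢
    simp [hm]
  have hcpos : (0 : ℝ) < H.card := by exact_mod_cast hc
  have key : ∀ c ∈ {c : ℝ | ∃ P : 𝒜 → ℝ, (∀ A, 0 ≤ P A) ∧ (∑ A, P A) = 1 ∧
      ∀ h ∈ ℋ, |∑ A, h A * P A| ≤ c}, m / H.card ≤ c := by
    rintro c ⟨P, hP0, hP1, hPc⟩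
    have hswap : ∑ A, P A * ∑ h ∈ H, h A = ∑ h ∈ H, ∑ A, h A * P A := by
      simp_rw [Finset.mul_sum]
      rw [Finset.sum_comm]
      simp_rw [mul_comm]
    have hub : ∑ h ∈ H, ∑ A, h A * P A ≤ H.card * c := by
      calc ∑ h ∈ H, ∑ A, h A * P A ≤ ∑ h ∈ H, |∑ A, h A * P A| :=
          Finset.sum_le_sum fun h _ => le_abs_self _
      _ ≤ ∑ _h ∈ H, c := Finset.sum_le_sum fun h hh => hPc h (hsub hh)
      _ = H.card * c := by rw [Finset.sum_const, nsmul_eq_mul]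
    have hlb : -(H.card * c) ≤ ∑ h ∈ H, ∑ A, h A * P A := by
      calc -(H.card * c) = ∑ _h ∈ H, -c := by rw [Finset.sum_const, nsmul_eq_mul]; ring
      _ ≤ ∑ h ∈ H, ∑ A, h A * P A := by
          refine Finset.sum_le_sum fun h hh => ?_
          have := hPc h (hsub hh)
          linarith [(abs_le.mp this).1]
    have hmcard : m ≤ H.card * c := by
      rcases hsign with hpos | hneg
      · have h1 : m ≤ ∑ A, P A * ∑ h ∈ H, h A := by
          calc m = ∑ A, P A * m := by rw [← Finset.sum_mul, hP1, one_mul]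
          _ ≤ ∑ A, P A * ∑ h ∈ H, h A := by
              refine Finset.sum_le_sum fun A _ => ?_
              refine mul_le_mul_of_nonneg_left ?_ (hP0 A)
              calc m ≤ |∑ h ∈ H, h A| := hmin A
              _ = ∑ h ∈ H, h A := abs_of_pos (hpos A)
        rw [hswap] at h1
        linarith
      · have hterm : ∀ A, P A * ∑ h ∈ H, h A ≤ P A * (-m) := by
          intro A
          refine mul_le_mul_of_nonneg_left ?_ (hP0 A)
          have hmA := hmin A
          rw [abs_of_neg (hneg A)] at hmA
          linarith
        have h1 : ∑ A, P A * ∑ h ∈ H, h A ≤ ∑ A, P A * (-m) :=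
          Finset.sum_le_sum fun A _ => hterm A
        have h2 : ∑ A, P A * (-m) = -m := by rw [← Finset.sum_mul, hP1, one_mul]
        rw [hswap, h2] at h1
        linarith
    rw [div_le_iff₀ hcpos]
    linarith
  have h2 : m / H.card ≤ coherenceParam ℋ :=
    le_csInf ⟨1, GBS.coh_set_nonempty ℋ hpm⟩ key
  rw [div_le_iff₀ hcpos] at h2
  linarith

/-- The key per-step bound: the minimizing cell satisfies
`|W(A₀)| ≤ max(c*, k/(k+2)) · |H|` whenever `|H| ≥ 2`. -/
lemma GBS.key_step {𝒜 : Type*} [Fintype 𝒜] [Nonempty 𝒜] (ℋ H : Finset (𝒜 → ℝ)) (hsub : H ⊆ ℋ)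
    (hpm : ∀ h ∈ ℋ, ∀ A, h A = 1 ∨ h A = -1) (k : ℕ) (hnbly : kNeighborly ℋ k)
    (A₀ : 𝒜) (hmin : ∀ A, |∑ h ∈ H, h A₀| ≤ |∑ h ∈ H, h A|) (h2 : 2 ≤ H.card) :
    |∑ h ∈ H, h A₀| ≤ max (coherenceParam ℋ) ((k:ℝ)/((k:ℝ)+2)) * H.card := by
  have hk2 : (0:ℝ) < (k:ℝ)+2 := by positivity
  have hcard0 : (0:ℝ) ≤ (H.card : ℝ) := Nat.cast_nonneg _
  by_cases hsign : (∀ A, 0 < ∑ h ∈ H, h A) ∨ (∀ A, ∑ h ∈ H, h A < 0)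
  · calc |∑ h ∈ H, h A₀| ≤ coherenceParam ℋ * H.card :=
        GBS.coh_bound ℋ H hsub hpm A₀ hmin hsign
    _ ≤ max (coherenceParam ℋ) ((k:ℝ)/((k:ℝ)+2)) * H.card :=
        mul_le_mul_of_nonneg_right (le_max_left _ _) hcard0
  · push_neg at hsign
    obtain ⟨⟨Am, hAm⟩, Ap, hAp⟩ := hsign
    obtain ⟨B, hB⟩ := GBS.exists_small ℋ H hsub hpm k hnbly Am Ap hAm hAp
    have hmk : |∑ h ∈ H, h A₀| ≤ (k : ℝ) := (hmin B).trans hB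
    obtain ⟨C, hC⟩ := GBS.two_distinct H (fun h hh => hpm h (hsub hh)) h2
    have hmd : |∑ h ∈ H, h A₀| ≤ (H.card : ℝ) - 2 := (hmin C).trans hC
    have hfinal : |∑ h ∈ H, h A₀| ≤ (k:ℝ)/((k:ℝ)+2) * H.card := by
      rw [div_mul_eq_mul_div, le_div_iff₀ hk2]
      rcases le_or_gt ((k:ℝ)+2) (H.card : ℝ) with hle | hlt
      · nlinarith [Nat.cast_nonneg (α := ℝ) k]
      · nlinarith [abs_nonneg (∑ h ∈ H, h A₀)]
    calc |∑ h ∈ H, h A₀| ≤ (k:ℝ)/((k:ℝ)+2) * H.card := hfinal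
    _ ≤ max (coherenceParam ℋ) ((k:ℝ)/((k:ℝ)+2)) * H.card :=
        mul_le_mul_of_nonneg_right (le_max_right _ _) hcard0

/-- Theorem 1, termination form: the GBS sequence satisfies `ℋ_n = {h*}`
for every `n ≥ ⌈log N / log(λ⁻¹)⌉`, where `λ = max{(1+c*)/2, (k+1)/(k+2)}`. -/
theorem stmt2 {𝒜 : Type*} [Fintype 𝒜] [Nonempty 𝒜] (ℋ : Finset (𝒜 → ℝ))
    (hpm : ∀ h ∈ ℋ, ∀ A, h A = 1 ∨ h A = -1)
    (N : ℕ) (hN : ℋ.card = N)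
    (k : ℕ) (hnbly : kNeighborly ℋ k)
    (hcs : coherenceParam ℋ < 1)
    (hstar : 𝒜 → ℝ) (hstarmem : hstar ∈ ℋ)
    (Hseq : ℕ → Finset (𝒜 → ℝ)) (Aseq : ℕ → 𝒜)
    (hinit : Hseq 0 = ℋ)
    (hmin : ∀ n, ∀ A : 𝒜, |∑ h ∈ Hseq n, h (Aseq n)| ≤ |∑ h ∈ Hseq n, h A|)
    (hstep : ∀ n, Hseq (n + 1) = (Hseq n).filter fun h => h (Aseq n) = hstar (Aseq n)) :
    ∀ n : ℕ,
      ⌈Real.log N / Real.log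
          ((max ((1 + coherenceParam ℋ) / 2) (((k : ℝ) + 1) / ((k : ℝ) + 2)))⁻¹)⌉₊ ≤ n →
      Hseq n = {hstar} := by
  intro n hn
  set cs := coherenceParam ℋ with hcs'
  set lam := max ((1 + cs) / 2) (((k : ℝ) + 1) / ((k : ℝ) + 2)) with hlam
  have hk2 : (0:ℝ) < (k:ℝ) + 2 := by positivity
  have hmu : 2 * lam - 1 = max cs ((k:ℝ)/((k:ℝ)+2)) := by
    have e : ((k:ℝ)+1)/((k:ℝ)+2) = (1 + (k:ℝ)/((k:ℝ)+2))/2 := by field_simp; ring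
    rcases le_total cs ((k:ℝ)/((k:ℝ)+2)) with h | h
    · rw [hlam, e, max_eq_right (by linarith), max_eq_right h]; ring
    · rw [hlam, e, max_eq_left (by linarith), max_eq_left h]; ring
  have hlam1 : lam < 1 := by
    apply max_lt
    · linarith
    · rw [div_lt_one hk2]; linarith
  have hlam0 : 0 < lam :=
    lt_of_lt_of_le (by positivity) (le_max_right ((1 + cs) / 2) _)
  have hNpos : 1 ≤ N := by
    rw [← hN]; exact Finset.card_pos.mpr ⟨hstar, hstarmem⟩
  have hsubset : ∀ m, Hseq m ⊆ ℋ := by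
    intro m; induction m with
    | zero => rw [hinit]
    | succ m ih => rw [hstep m]; exact (Finset.filter_subset _ _).trans ih
  have hmem : ∀ m, hstar ∈ Hseq m := by
    intro m; induction m with
    | zero => rw [hinit]; exact hstarmem
    | succ m ih => rw [hstep m]; exact Finset.mem_filter.mpr ⟨ih, rfl⟩
  have inv : ∀ m, Hseq m = {hstar} ∨ ((Hseq m).card : ℝ) ≤ lam ^ m * N := by
    intro m; induction m with
    | zero => right; rw [hinit, hN, pow_zero, one_mul]
    | succ m ih =>
        rcases ih with hsing | hcard
        · left; rw [hstep m, hsing, Finset.filter_singleton, if_pos rfl]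
        · rcases lt_or_ge (Hseq m).card 2 with hlt | hge
          · left
            have h1 : 1 ≤ (Hseq m).card := Finset.card_pos.mpr ⟨hstar, hmem m⟩
            have hcd : (Hseq m).card = 1 := by omega
            obtain ⟨a, ha⟩ := Finset.card_eq_one.mp hcd
            have hsa : hstar = a := by
              have := hmem m; rw [ha, Finset.mem_singleton] at this; exact this
            rw [hstep m, ha, ← hsa, Finset.filter_singleton, if_pos rfl]
          · right
            have hks := GBS.key_step ℋ (Hseq m) (hsubset m) hpm k hnbly (Aseq m) (hmin m) hge
            have hsb : 2 * (((Hseq (m+1))).card : ℝ)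
                ≤ ((Hseq m).card : ℝ) + |∑ h ∈ Hseq m, h (Aseq m)| := by
              rw [hstep m]
              exact GBS.split_bound (Hseq m) (fun h hh => hpm h (hsubset m hh)) (Aseq m)
                (hstar (Aseq m))
            have hW : |∑ h ∈ Hseq m, h (Aseq m)| ≤ (2 * lam - 1) * (Hseq m).card := by
              rw [hmu]; exact hks
            have hcard1 : ((Hseq (m+1)).card : ℝ) ≤ lam * (Hseq m).card := by nlinarith
            calc ((Hseq (m+1)).card : ℝ) ≤ lam * (Hseq m).card := hcard1
            _ ≤ lam * (lam ^ m * N) := mul_le_mul_of_nonneg_left hcard hlam0.le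
            _ = lam ^ (m+1) * N := by ring
  rcases inv n with hs | hc
  · exact hs
  · have hloginv : 0 < Real.log lam⁻¹ := Real.log_pos ((one_lt_inv₀ hlam0).2 hlam1)
    have hge : (Real.log N / Real.log lam⁻¹) ≤ (n : ℝ) :=
      le_trans (Nat.le_ceil _) (by exact_mod_cast hn)
    have h1 : Real.log N ≤ n * Real.log lam⁻¹ := by
      rw [div_le_iff₀ hloginv] at hge; linarith
    rw [Real.log_inv] at h1
    have h2 : Real.log (lam ^ n) ≤ Real.log ((N:ℝ)⁻¹) := by
      rw [Real.log_pow, Real.log_inv]; linarith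
    have hNr : (0:ℝ) < (N:ℝ) := by exact_mod_cast hNpos
    have h3 : lam ^ n ≤ (N:ℝ)⁻¹ :=
      (Real.log_le_log_iff (pow_pos hlam0 n) (by positivity)).mp h2
    have h4 : lam ^ n * N ≤ 1 := by
      calc lam ^ n * N ≤ (N:ℝ)⁻¹ * N := mul_le_mul_of_nonneg_right h3 hNr.le
      _ = 1 := inv_mul_cancel₀ (ne_of_gt hNr)
    have h5 : ((Hseq n).card : ℝ) ≤ 1 := hc.trans h4
    have h6 : (Hseq n).card ≤ 1 := by exact_mod_cast h5
    have h7 : 1 ≤ (Hseq n).card := Finset.card_pos.mpr ⟨hstar, hmem n⟩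
    obtain ⟨a, ha⟩ := Finset.card_eq_one.mp (le_antisymm h6 h7)
    have hsa := hmem n
    rw [ha, Finset.mem_singleton] at hsa
    rw [ha, hsa]
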